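/- Let Γ be an infinite group with trivial center. Then every element of the wreath product base H^(Γ) other than the identity has an infinite orbit under conjugation by elements of Γ × {e} ⊂ Γ × Γ, i.e. for x ∈ H^(Γ), x ≠ 0, the set {(g,e)·x | g ∈ Γ} is infinite. -/
import Mathlib


/-- if `Γ` is an infinite group with trivial center and `H` is a nontrivial
group, then every nonzero element `x` of the wreath product base `H^(Γ)` has an infinite
orbit under conjugation by `Γ × {e} ⊆ Γ × Γ`, i.e. the set of translates
`(g,e)·x`, given by `((g,e)·x)_k = x_{g⁻¹ k}`, is infinite. -/
theorem stmt_4 {Γ H : Type*} [Group Γ] [Infinite Γ] [AddGroup H] [Nontrivial H]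
    (hZ : Subgroup.center Γ = ⊥)
    (x : Γ →₀ H) (hx : x ≠ 0) :
    {y : Γ →₀ H | ∃ g : Γ, ∀ k : Γ, y k = x (g⁻¹ * k)}.Infinite := by
  obtain ⟨k₀, hk₀⟩ : ∃ k, x k ≠ 0 := by
    by_contra h
    push_neg at h
    exact hx (Finsupp.ext h)
  by_contra hfin
  rw [Set.not_infinite] at hfin
  have hΓ : (Set.univ : Set Γ).Finite := by
    have hsub : (Set.univ : Set Γ) ⊆
        ⋃ y ∈ {y : Γ →₀ H | ∃ g : Γ, ∀ k : Γ, y k = x (g⁻¹ * k)},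
          ((fun g => g * k₀⁻¹) '' (y.support : Set Γ)) := by
      intro g _
      have hy : (Finsupp.equivMapDomain (Equiv.mulLeft g) x) ∈
          {y : Γ →₀ H | ∃ g : Γ, ∀ k : Γ, y k = x (g⁻¹ * k)} :=
        ⟨g, fun k => by simp [Finsupp.equivMapDomain_apply]⟩
      refine Set.mem_biUnion hy ?_
      refine ⟨g * k₀, ?_, by group⟩
      simp [Finsupp.equivMapDomain_apply, hk₀]
    exact Set.Finite.subset
      (hfin.biUnion fun y _ => (y.support.finite_toSet.image _)) hsub
  exact Set.infinite_univ hΓ
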